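/- Let s ∈ ℝ and m_s = [[s, 1−s],[−1,1]] ∈ SL₂(ℝ), D the diagonal subgroup modulo ±I, ξ = [[0,1],[−1,0]], and G = D ∪ Dξ ⊆ PSL₂(ℝ). Then {g ∈ G : m_s g m_s⁻¹ ∈ G} equals {id} if s ∉ (0,1), and equals {id, [[0, μ],[−μ⁻¹, 0]]} with μ = √((1−s)/s) if s ∈ (0,1). -/

import Mathlib

/-- `SL(2,ℝ)`. -/
abbrev SL2R := Matrix.SpecialLinearGroup (Fin 2) ℝ

/-- `PSL(2,ℝ) = SL(2,ℝ)/{±I}`. -/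
abbrev PSL2R := SL2R ⧸ Subgroup.center SL2R

/-- The projection `SL(2,ℝ) → PSL(2,ℝ)`. -/
def projPSL : SL2R →* PSL2R := QuotientGroup.mk' (Subgroup.center SL2R)

/-- The image `D` of the diagonal subgroup in `PSL(2,ℝ)`. -/
def Dset : Set PSL2R :=
  {g | ∃ (α : ℝ) (hα : α ≠ 0),
    g = projPSL ⟨!![α, 0; 0, α⁻¹], by rw [Matrix.det_fin_two_of]; field_simp <;> norm_num⟩}

/-- The class `ξ` of `[[0,1],[-1,0]]` in `PSL(2,ℝ)`. -/
def xiP : PSL2R := projPSL ⟨!![0, 1; -1, 0], by rw [Matrix.det_fin_two_of]; norm_num⟩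

/-- The subgroup `G = D ∪ Dξ` of `PSL(2,ℝ)`, as a set. -/
def Gset : Set PSL2R := Dset ∪ (fun g => g * xiP) '' Dset

/-- The class of the matrix `m_s = [[s, 1-s],[-1, 1]]` (of determinant 1). -/
def mP (s : ℝ) : PSL2R :=
  projPSL ⟨!![s, 1 - s; -1, 1], by rw [Matrix.det_fin_two_of]; ring⟩

noncomputable def negOne : SL2R := ⟨-1, by rw [Matrix.det_neg]; simp⟩

lemma negOne_mem_center : negOne ∈ Subgroup.center SL2R := by
  refine Subgroup.mem_center_iff.mpr fun g => Subtype.ext ?_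
  simp only [Matrix.SpecialLinearGroup.coe_mul]
  show (g : Matrix (Fin 2) (Fin 2) ℝ) * (-1) = (-1) * g
  rw [mul_neg_one, neg_one_mul]

lemma proj_eq_iff (A B : SL2R) :
    projPSL A = projPSL B ↔ (A : Matrix (Fin 2) (Fin 2) ℝ) = B ∨ (A : Matrix (Fin 2) (Fin 2) ℝ) = -(B : Matrix (Fin 2) (Fin 2) ℝ) := by
  constructor
  · intro h
    have h' : A⁻¹ * B ∈ Subgroup.center SL2R := QuotientGroup.eq.mp h
    obtain ⟨r, hr2, hrs⟩ := Matrix.SpecialLinearGroup.mem_center_iff.mp h'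
    rw [Fintype.card_fin] at hr2
    have hr : r = 1 ∨ r = -1 := by
      have hr2' : r * r = 1 := by nlinarith
      exact mul_self_eq_one_iff.mp hr2'
    rcases hr with rfl | rfl
    · rw [map_one] at hrs
      have : A⁻¹ * B = 1 := Subtype.ext hrs.symm
      have hBA : B = A := by
        have := congrArg (A * ·) this
        simpa [mul_assoc] using this
      exact Or.inl (by rw [hBA])
    · rw [map_neg, map_one] at hrs
      have : A⁻¹ * B = negOne := Subtype.ext (by rw [← hrs]; rfl)
      have hBA : B = A * negOne := by
        have := congrArg (A * ·) this
        simpa [mul_assoc] using this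
      right
      have : (B : Matrix (Fin 2) (Fin 2) ℝ) = (A : Matrix (Fin 2) (Fin 2) ℝ) * (-1) := by
        rw [hBA]; rfl
      rw [this, mul_neg_one, neg_neg]
  · rintro (h | h)
    · exact congrArg projPSL (Subtype.ext h)
    · have hBA : A = B * negOne := Subtype.ext (by
        show (A : Matrix (Fin 2) (Fin 2) ℝ) = (B : Matrix (Fin 2) (Fin 2) ℝ) * (-1)
        rw [mul_neg_one, h])
      rw [hBA, map_mul]
      have : projPSL negOne = 1 := (QuotientGroup.eq_one_iff _).mpr negOne_mem_center
      rw [this, mul_one]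

lemma mem_Gset_iff (A : SL2R) :
    projPSL A ∈ Gset ↔
      ((A : Matrix (Fin 2) (Fin 2) ℝ) 0 1 = 0 ∧ (A : Matrix (Fin 2) (Fin 2) ℝ) 1 0 = 0) ∨
      ((A : Matrix (Fin 2) (Fin 2) ℝ) 0 0 = 0 ∧ (A : Matrix (Fin 2) (Fin 2) ℝ) 1 1 = 0) := by
  constructor
  · rintro (⟨α, hα, hg⟩ | ⟨x, ⟨α, hα, hx⟩, hg⟩)
    · left
      rcases (proj_eq_iff _ _).mp hg with h | h <;>
        exact ⟨by rw [h]; simp, by rw [h]; simp⟩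
    · right
      subst hx
      rw [show (fun g => g * xiP) (projPSL ⟨!![α, 0; 0, α⁻¹], by rw [Matrix.det_fin_two_of]; field_simp <;> norm_num⟩) =
          projPSL (⟨!![α, 0; 0, α⁻¹], by rw [Matrix.det_fin_two_of]; field_simp <;> norm_num⟩ *
            ⟨!![0, 1; -1, 0], by rw [Matrix.det_fin_two_of]; norm_num⟩) from (map_mul _ _ _).symm] at hg
      have hg' := (proj_eq_iff _ _).mp hg.symm
      have hprod : ((⟨!![α, 0; 0, α⁻¹], by rw [Matrix.det_fin_two_of]; field_simp <;> norm_num⟩ *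
            ⟨!![0, 1; -1, 0], by rw [Matrix.det_fin_two_of]; norm_num⟩ : SL2R) : Matrix (Fin 2) (Fin 2) ℝ)
          = !![0, α; -α⁻¹, 0] := by
        show !![α, 0; 0, α⁻¹] * !![0, 1; -1, 0] = _
        rw [Matrix.mul_fin_two]; norm_num
      rw [hprod] at hg'
      rcases hg' with h | h <;> exact ⟨by rw [h]; simp, by rw [h]; simp⟩
  · have hdet := A.2
    rw [Matrix.det_fin_two] at hdet
    rintro (⟨h01, h10⟩ | ⟨h00, h11⟩)
    · rw [h01, h10] at hdet
      have hdet' : (A : Matrix (Fin 2) (Fin 2) ℝ) 0 0 * (A : Matrix (Fin 2) (Fin 2) ℝ) 1 1 = 1 := by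
        linarith
      have hα : (A : Matrix (Fin 2) (Fin 2) ℝ) 0 0 ≠ 0 := left_ne_zero_of_mul_eq_one hdet'
      have h11' : (A : Matrix (Fin 2) (Fin 2) ℝ) 1 1 = ((A : Matrix (Fin 2) (Fin 2) ℝ) 0 0)⁻¹ := by
        field_simp
        linarith
      left
      refine ⟨(A : Matrix (Fin 2) (Fin 2) ℝ) 0 0, hα, congrArg projPSL (Subtype.ext ?_)⟩
      show (A : Matrix (Fin 2) (Fin 2) ℝ) = _
      conv_lhs => rw [Matrix.eta_fin_two (A : Matrix (Fin 2) (Fin 2) ℝ)]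
      rw [h01, h10, h11']
    · rw [h00, h11] at hdet
      have hdet' : (A : Matrix (Fin 2) (Fin 2) ℝ) 0 1 * (A : Matrix (Fin 2) (Fin 2) ℝ) 1 0 = -1 := by
        linarith
      have hα : (A : Matrix (Fin 2) (Fin 2) ℝ) 0 1 ≠ 0 := by
        intro h; rw [h, zero_mul] at hdet'; norm_num at hdet'
      have h10' : (A : Matrix (Fin 2) (Fin 2) ℝ) 1 0 = -((A : Matrix (Fin 2) (Fin 2) ℝ) 0 1)⁻¹ := by
        field_simp
        linarith
      right
      refine ⟨projPSL ⟨!![(A : Matrix (Fin 2) (Fin 2) ℝ) 0 1, 0; 0, ((A : Matrix (Fin 2) (Fin 2) ℝ) 0 1)⁻¹],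
          by rw [Matrix.det_fin_two_of]; field_simp <;> norm_num⟩, ⟨_, hα, rfl⟩, ?_⟩
      show _ * xiP = _
      rw [xiP]
      refine (map_mul projPSL _ _).symm.trans ?_
      refine congrArg projPSL (Subtype.ext ?_)
      show !![_, 0; 0, _] * !![0, 1; -1, 0] = (A : Matrix (Fin 2) (Fin 2) ℝ)
      rw [Matrix.mul_fin_two]
      conv_rhs => rw [Matrix.eta_fin_two (A : Matrix (Fin 2) (Fin 2) ℝ)]
      rw [h00, h11, h10']
      norm_num

noncomputable def mS (s : ℝ) : SL2R := ⟨!![s, 1 - s; -1, 1], by rw [Matrix.det_fin_two_of]; ring⟩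
noncomputable def mSi (s : ℝ) : SL2R := ⟨!![1, s - 1; 1, s], by rw [Matrix.det_fin_two_of]; ring⟩

lemma mS_inv (s : ℝ) : (mS s)⁻¹ = mSi s := by
  apply inv_eq_of_mul_eq_one_right
  apply Subtype.ext
  rw [Matrix.SpecialLinearGroup.coe_mul]
  show !![s, 1 - s; -1, 1] * !![1, s - 1; 1, s] = (1 : Matrix (Fin 2) (Fin 2) ℝ)
  rw [Matrix.mul_fin_two, Matrix.one_fin_two]
  congr 1 <;> ring_nf

lemma conj_proj (s : ℝ) (A : SL2R) :
    mP s * projPSL A * (mP s)⁻¹ = projPSL (mS s * A * mSi s) := by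
  rw [show mP s = projPSL (mS s) from rfl, ← map_mul, ← mS_inv, ← map_inv, ← map_mul]

lemma conj_diag_coe (s α : ℝ) (hα : α ≠ 0) :
    ((mS s * ⟨!![α, 0; 0, α⁻¹], by rw [Matrix.det_fin_two_of]; field_simp <;> norm_num⟩ * mSi s : SL2R) :
        Matrix (Fin 2) (Fin 2) ℝ) =
      !![s*α + (1-s)*α⁻¹, s*α*(s-1) + (1-s)*α⁻¹*s; -α + α⁻¹, -α*(s-1) + α⁻¹*s] := by
  simp only [Matrix.SpecialLinearGroup.coe_mul]
  show !![s, 1 - s; -1, 1] * !![α, 0; 0, α⁻¹] * !![1, s - 1; 1, s] = _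
  rw [Matrix.mul_fin_two, Matrix.mul_fin_two]
  congr 1 <;> ring

lemma conj_anti_coe (s α : ℝ) (hα : α ≠ 0) :
    ((mS s * (⟨!![α, 0; 0, α⁻¹], by rw [Matrix.det_fin_two_of]; field_simp <;> norm_num⟩ *
        ⟨!![0, 1; -1, 0], by rw [Matrix.det_fin_two_of]; norm_num⟩) * mSi s : SL2R) :
        Matrix (Fin 2) (Fin 2) ℝ) =
      !![s*α - (1-s)*α⁻¹, s^2*α + (1-s)^2*α⁻¹; -α - α⁻¹, (1-s)*α⁻¹ - s*α] := by
  simp only [Matrix.SpecialLinearGroup.coe_mul]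
  show !![s, 1 - s; -1, 1] * (!![α, 0; 0, α⁻¹] * !![0, 1; -1, 0]) * !![1, s - 1; 1, s] = _
  rw [Matrix.mul_fin_two, Matrix.mul_fin_two, Matrix.mul_fin_two]
  congr 1 <;> ring

lemma one_mem_Gset : (1 : PSL2R) ∈ Gset := by
  refine Or.inl ⟨1, one_ne_zero, ?_⟩
  symm
  rw [← map_one projPSL]
  refine congrArg projPSL (Subtype.ext ?_)
  show !![(1:ℝ), 0; 0, (1:ℝ)⁻¹] = (1 : Matrix (Fin 2) (Fin 2) ℝ)
  rw [Matrix.one_fin_two]; norm_num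

lemma key (s : ℝ) {g : PSL2R} (hg : g ∈ Gset) (hc : mP s * g * (mP s)⁻¹ ∈ Gset) :
    g = 1 ∨ (s ∈ Set.Ioo (0:ℝ) 1 ∧
      ∀ hd : Matrix.det !![0, Real.sqrt ((1 - s)/s); -(Real.sqrt ((1 - s)/s))⁻¹, 0] = 1,
        g = projPSL ⟨!![0, Real.sqrt ((1 - s)/s); -(Real.sqrt ((1 - s)/s))⁻¹, 0], hd⟩) := by
  rcases hg with ⟨α, hα, rfl⟩ | ⟨x, ⟨α, hα, rfl⟩, rfl⟩
  · erw [conj_proj, mem_Gset_iff, conj_diag_coe s α hα] at hc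
    simp only [Matrix.cons_val', Matrix.cons_val_zero, Matrix.cons_val_one, Matrix.head_cons,
      Matrix.head_fin_const, Matrix.empty_val', Matrix.cons_val_fin_one, Matrix.of_apply] at hc
    rcases hc with ⟨h1, h2⟩ | ⟨h1, h2⟩
    · left
      have hαα : α * α = 1 := by
        field_simp at h2
        nlinarith [h2]
      rcases mul_self_eq_one_iff.mp hαα with rfl | rfl
      · rw [← map_one projPSL]
        refine congrArg projPSL (Subtype.ext ?_)
        show !![(1:ℝ), 0; 0, (1:ℝ)⁻¹] = (1 : Matrix (Fin 2) (Fin 2) ℝ)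
        rw [Matrix.one_fin_two]; norm_num
      · have hX : (⟨!![(-1:ℝ), 0; 0, (-1:ℝ)⁻¹], by rw [Matrix.det_fin_two_of]; field_simp <;> norm_num⟩ : SL2R) = negOne := by
          refine Subtype.ext ?_
          show !![(-1:ℝ), 0; 0, (-1:ℝ)⁻¹] = -(1 : Matrix (Fin 2) (Fin 2) ℝ)
          rw [Matrix.one_fin_two]; norm_num
        rw [hX]
        exact (QuotientGroup.eq_one_iff negOne).mpr negOne_mem_center
    · exfalso
      field_simp at h1 h2
      nlinarith [sq_nonneg α, h1, h2]
  · have hgr : (fun g => g * xiP) (projPSL (⟨!![α, 0; 0, α⁻¹], by rw [Matrix.det_fin_two_of]; field_simp <;> norm_num⟩ : SL2R)) =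
        projPSL (⟨!![α, 0; 0, α⁻¹], by rw [Matrix.det_fin_two_of]; field_simp <;> norm_num⟩ *
          ⟨!![0, 1; -1, 0], by rw [Matrix.det_fin_two_of]; norm_num⟩ : SL2R) := (map_mul _ _ _).symm
    rw [hgr] at hc ⊢
    rw [conj_proj, mem_Gset_iff, conj_anti_coe s α hα] at hc
    simp only [Matrix.cons_val', Matrix.cons_val_zero, Matrix.cons_val_one, Matrix.head_cons,
      Matrix.head_fin_const, Matrix.empty_val', Matrix.cons_val_fin_one, Matrix.of_apply] at hc
    rcases hc with ⟨h1, h2⟩ | ⟨h1, h2⟩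
    · exfalso
      field_simp at h2
      nlinarith [sq_nonneg α, h2]
    · right
      have hα2 : 0 < α ^ 2 := by positivity
      have hkey : s * α ^ 2 = 1 - s := by
        have := congrArg (· * α) h1
        field_simp at this
        nlinarith [this]
      have hs0 : 0 < s := by nlinarith
      have hs1 : s < 1 := by nlinarith
      refine ⟨⟨hs0, hs1⟩, ?_⟩
      intro hd
      have hμsq : Real.sqrt ((1 - s)/s) ^ 2 = (1 - s)/s :=
        Real.sq_sqrt (le_of_lt (div_pos (by linarith) hs0))
      have hαsq : α ^ 2 = Real.sqrt ((1 - s)/s) ^ 2 := by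
        rw [hμsq]
        field_simp
        nlinarith [hkey]
      have hαμ : α = Real.sqrt ((1 - s)/s) ∨ α = -Real.sqrt ((1 - s)/s) := by
        have hz : (α - Real.sqrt ((1 - s)/s)) * (α + Real.sqrt ((1 - s)/s)) = 0 := by nlinarith [hαsq]
        rcases mul_eq_zero.mp hz with h | h
        · exact Or.inl (by linarith)
        · exact Or.inr (by linarith)
      have hμ0 : Real.sqrt ((1 - s)/s) ≠ 0 :=
        ne_of_gt (Real.sqrt_pos.mpr (div_pos (by linarith) hs0))
      rcases hαμ with h | h
      · refine congrArg projPSL (Subtype.ext ?_)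
        show !![α, 0; 0, α⁻¹] * !![0, 1; -1, 0] = !![0, Real.sqrt ((1 - s)/s); -(Real.sqrt ((1 - s)/s))⁻¹, 0]
        rw [Matrix.mul_fin_two, h]
        norm_num [inv_neg]
      · refine (proj_eq_iff _ _).mpr (Or.inr ?_)
        show !![α, 0; 0, α⁻¹] * !![0, 1; -1, 0] = -!![0, Real.sqrt ((1 - s)/s); -(Real.sqrt ((1 - s)/s))⁻¹, 0]
        rw [Matrix.mul_fin_two, h]
        norm_num [inv_neg]

lemma one_in_set (s : ℝ) : (1 : PSL2R) ∈ {g ∈ Gset | mP s * g * (mP s)⁻¹ ∈ Gset} := by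
  refine ⟨one_mem_Gset, ?_⟩
  rw [mul_one, mul_inv_cancel]
  exact one_mem_Gset

lemma xi_in_set {s : ℝ} (hs : s ∈ Set.Ioo (0:ℝ) 1)
    (hd : Matrix.det !![0, Real.sqrt ((1 - s)/s); -(Real.sqrt ((1 - s)/s))⁻¹, 0] = 1) :
    projPSL ⟨!![0, Real.sqrt ((1 - s)/s); -(Real.sqrt ((1 - s)/s))⁻¹, 0], hd⟩ ∈
      {g ∈ Gset | mP s * g * (mP s)⁻¹ ∈ Gset} := by
  obtain ⟨hs0, hs1⟩ := hs
  have hμ0 : (0:ℝ) < Real.sqrt ((1 - s)/s) := Real.sqrt_pos.mpr (div_pos (by linarith) hs0)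
  have hμsq : Real.sqrt ((1 - s)/s) ^ 2 = (1 - s)/s :=
    Real.sq_sqrt (le_of_lt (div_pos (by linarith) hs0))
  have hrepr : projPSL (⟨!![0, Real.sqrt ((1 - s)/s); -(Real.sqrt ((1 - s)/s))⁻¹, 0], hd⟩ : SL2R) =
      projPSL (⟨!![Real.sqrt ((1 - s)/s), 0; 0, (Real.sqrt ((1 - s)/s))⁻¹],
          by rw [Matrix.det_fin_two_of, mul_inv_cancel₀ (ne_of_gt hμ0)]; norm_num⟩ *
        ⟨!![0, 1; -1, 0], by rw [Matrix.det_fin_two_of]; norm_num⟩ : SL2R) := by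
    refine congrArg projPSL (Subtype.ext ?_)
    show _ = !![Real.sqrt ((1 - s)/s), 0; 0, (Real.sqrt ((1 - s)/s))⁻¹] * !![0, 1; -1, 0]
    rw [Matrix.mul_fin_two]
    norm_num
  constructor
  · right
    refine ⟨_, ⟨Real.sqrt ((1 - s)/s), ne_of_gt hμ0, rfl⟩, ?_⟩
    show _ * xiP = _
    rw [xiP]
    exact (map_mul projPSL _ _).symm.trans hrepr.symm
  · erw [hrepr, conj_proj, mem_Gset_iff, conj_anti_coe s _ (ne_of_gt hμ0)]
    simp only [Matrix.cons_val', Matrix.cons_val_zero, Matrix.cons_val_one, Matrix.head_cons,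
      Matrix.head_fin_const, Matrix.empty_val', Matrix.cons_val_fin_one, Matrix.of_apply]
    right
    set μ := Real.sqrt ((1 - s)/s) with hμdef
    have hμne : μ ≠ 0 := ne_of_gt hμ0
    have hkey : s * μ ^ 2 = 1 - s := by
      rw [hμsq]; field_simp
    constructor
    · field_simp
      nlinarith [hkey]
    · field_simp
      nlinarith [hkey]

theorem stmt17 (s : ℝ) :
    (s ∉ Set.Ioo (0:ℝ) 1 →
      {g ∈ Gset | mP s * g * (mP s)⁻¹ ∈ Gset} = {1}) ∧
    (∀ hs : s ∈ Set.Ioo (0:ℝ) 1,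
      {g ∈ Gset | mP s * g * (mP s)⁻¹ ∈ Gset} =
        {1, projPSL ⟨!![0, Real.sqrt ((1 - s)/s); -(Real.sqrt ((1 - s)/s))⁻¹, 0], by
          have hμ : Real.sqrt ((1 - s)/s) ≠ 0 :=
            ne_of_gt (Real.sqrt_pos.mpr (div_pos (by linarith [hs.2]) hs.1))
          rw [Matrix.det_fin_two_of]; field_simp <;> norm_num⟩}) := by
  constructor
  · intro hs
    ext g
    simp only [Set.mem_singleton_iff]
    constructor
    · rintro ⟨hg, hc⟩
      rcases key s hg hc with h | ⟨hmem, _⟩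
      · exact h
      · exact absurd hmem hs
    · rintro rfl
      exact one_in_set s
  · intro hs
    ext g
    simp only [Set.mem_insert_iff, Set.mem_singleton_iff]
    constructor
    · rintro ⟨hg, hc⟩
      rcases key s hg hc with h | ⟨_, h⟩
      · exact Or.inl h
      · exact Or.inr (h _)
    · rintro (rfl | rfl)
      · exact one_in_set s
      · exact xi_in_set hs _
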